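/- Assume γ₁ ≤ γ₂ and γ₁/γ₂ > α, and set l = √(γ₂/α). Then the following are equivalent: (a) every P ∈ D satisfies P({t ∈ ℝ : t·y ≤ b}) ≥ 1 − α; (b) μ·y + l·√(Σ·y²) ≤ b. (This is the second case of the paper's Theorem 1.) -/

import Mathlib

open MeasureTheory Real
open scoped ENNReal

/-- integral against a two-point combination of Dirac measures -/
lemma integral_twopoint (f : ℝ → ℝ) (p q u v : ℝ) (hp : 0 ≤ p) (hq : 0 ≤ q) :
    ∫ t, f t ∂((ENNReal.ofReal p) • Measure.dirac u + (ENNReal.ofReal q) • Measure.dirac v)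
      = p * f u + q * f v := by
  have hIu : Integrable f (Measure.dirac u) :=
    (integrable_const (f u)).congr (ae_eq_dirac f).symm
  have hIv : Integrable f (Measure.dirac v) :=
    (integrable_const (f v)).congr (ae_eq_dirac f).symm
  rw [integral_add_measure (hIu.smul_measure ENNReal.ofReal_ne_top)
      (hIv.smul_measure ENNReal.ofReal_ne_top),
    integral_smul_measure, integral_smul_measure, integral_dirac, integral_dirac,
    ENNReal.toReal_ofReal hp, ENNReal.toReal_ofReal hq, smul_eq_mul, smul_eq_mul]

lemma twopoint_prob (β u v : ℝ) (h0 : 0 ≤ β) (h1 : β ≤ 1) :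
    IsProbabilityMeasure
      ((ENNReal.ofReal (1 - β)) • Measure.dirac u + (ENNReal.ofReal β) • Measure.dirac v) := by
  constructor
  rw [Measure.add_apply, Measure.smul_apply, Measure.smul_apply,
    Measure.dirac_apply_of_mem (Set.mem_univ u), Measure.dirac_apply_of_mem (Set.mem_univ v),
    smul_eq_mul, smul_eq_mul, mul_one, mul_one,
    ← ENNReal.ofReal_add (by linarith) h0]
  norm_num

lemma twopoint_memlp (β u v : ℝ) (h0 : 0 ≤ β) (h1 : β ≤ 1) :
    MemLp (id : ℝ → ℝ) 2
      ((ENNReal.ofReal (1 - β)) • Measure.dirac u + (ENNReal.ofReal β) • Measure.dirac v) := by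
  set P := (ENNReal.ofReal (1 - β)) • Measure.dirac u + (ENNReal.ofReal β) • Measure.dirac v
    with hPdef
  haveI : IsProbabilityMeasure P := twopoint_prob β u v h0 h1
  refine memLp_of_bounded (a := -(|u| + |v|)) (b := |u| + |v|) ?_ aestronglyMeasurable_id 2
  have hmu : u ∈ Set.Icc (-(|u| + |v|)) (|u| + |v|) :=
    ⟨by nlinarith [abs_nonneg v, neg_abs_le u], by nlinarith [abs_nonneg v, le_abs_self u]⟩
  have hmv : v ∈ Set.Icc (-(|u| + |v|)) (|u| + |v|) :=
    ⟨by nlinarith [abs_nonneg u, neg_abs_le v], by nlinarith [abs_nonneg u, le_abs_self v]⟩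
  rw [ae_iff]
  have hc : MeasurableSet {t : ℝ | ¬ (id t ∈ Set.Icc (-(|u| + |v|)) (|u| + |v|))} :=
    measurableSet_Icc.compl
  have hu : Measure.dirac u {t : ℝ | ¬ (id t ∈ Set.Icc (-(|u| + |v|)) (|u| + |v|))} = 0 := by
    rw [Measure.dirac_apply' _ hc]
    exact Set.indicator_of_notMem (by simpa using hmu) _
  have hv : Measure.dirac v {t : ℝ | ¬ (id t ∈ Set.Icc (-(|u| + |v|)) (|u| + |v|))} = 0 := by
    rw [Measure.dirac_apply' _ hc]
    exact Set.indicator_of_notMem (by simpa using hmv) _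
  show P _ = 0
  rw [hPdef, Measure.add_apply, Measure.smul_apply, Measure.smul_apply, hu, hv]
  simp

set_option maxHeartbeats 1000000 in
/-- Second case of the paper's Theorem 1: under `γ₁ ≤ γ₂` and `γ₁/γ₂ > α`, the
distributionally robust chance constraint over the moment ambiguity set `D` is
equivalent to a second-order cone constraint with `l = √(γ₂/α)`. -/
theorem stmt_1
    (α γ₁ γ₂ Sig μ b y : ℝ)
    (hα0 : 0 < α) (hα1 : α < 1) (hγ₁ : 0 < γ₁) (hγ₂ : 1 < γ₂) (hSig : 0 < Sig)
    (hle : γ₁ ≤ γ₂) (hcase : γ₁ / γ₂ > α)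
    (l : ℝ) (hl : l = Real.sqrt (γ₂ / α))
    (D : Set (Measure ℝ))
    (hD : D = {P : Measure ℝ | IsProbabilityMeasure P ∧ MemLp (id : ℝ → ℝ) 2 P ∧
      ((∫ t, t ∂P) - μ) ^ 2 ≤ γ₁ * Sig ∧ (∫ t, (t - μ) ^ 2 ∂P) ≤ γ₂ * Sig}) :
    (∀ P ∈ D, 1 - α ≤ (P {t : ℝ | t * y ≤ b}).toReal) ↔
      μ * y + l * Real.sqrt (Sig * y ^ 2) ≤ b := by
  have hγ₂0 : (0:ℝ) < γ₂ := by linarith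
  have hS : MeasurableSet {t : ℝ | t * y ≤ b} :=
    measurableSet_le (measurable_id.mul_const y) measurable_const
  have hlK : l * Real.sqrt (Sig * y ^ 2) = Real.sqrt (γ₂ * Sig * y ^ 2 / α) := by
    rw [hl, ← Real.sqrt_mul (by positivity)]
    ring_nf
  constructor
  · -- (a) → (b) : by contradiction, construct a bad measure
    intro hall
    by_contra hb
    push_neg at hb
    by_cases hy : y = 0
    · -- y = 0 : b < 0, use the Dirac measure at μ
      subst hy
      have hb0 : b < 0 := by
        have h0 : Real.sqrt (Sig * 0 ^ 2) = 0 := by norm_num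
        rw [h0] at hb; linarith [hb]
      have hmem : Measure.dirac μ ∈ D := by
        rw [hD]
        refine ⟨Measure.dirac.isProbabilityMeasure, ?_, ?_, ?_⟩
        · exact (memLp_const μ).ae_eq (ae_eq_dirac (id : ℝ → ℝ)).symm
        · rw [integral_dirac]; norm_num; positivity
        · rw [integral_dirac]; norm_num; positivity
      have hge := hall _ hmem
      have hempty : {t : ℝ | t * 0 ≤ b} = ∅ := by
        ext t; simp; linarith
      rw [hempty] at hge
      simp at hge
      linarith
    · -- y ≠ 0
      have hy2 : (0:ℝ) < y ^ 2 := by positivity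
      have hay : (0:ℝ) < |y| := abs_pos.mpr hy
      obtain ⟨K, hK0, hK2, hbK⟩ :
          ∃ K : ℝ, 0 < K ∧ α * K ^ 2 = γ₂ * Sig * y ^ 2 ∧ b < μ * y + K := by
        refine ⟨l * Real.sqrt (Sig * y ^ 2), by rw [hlK]; positivity, ?_, hb⟩
        rw [hlK, Real.sq_sqrt (by positivity)]
        field_simp
      set c : ℝ := b - μ * y with hc
      have hcK : c < K := by rw [hc]; linarith
      -- choose β with α < β satisfying all needed strict bounds
      obtain ⟨β, hβα, hβ1, hβγ, hβc⟩ :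
          ∃ β : ℝ, α < β ∧ β < 1 ∧ β * γ₂ < γ₁ ∧ (0 < c → β * c ^ 2 < γ₂ * Sig * y ^ 2) := by
        set u : ℝ := min (min 1 (γ₁ / γ₂))
          (if 0 < c then γ₂ * Sig * y ^ 2 / c ^ 2 else 1) with hudef
        have hαu : α < u := by
          refine lt_min (lt_min hα1 hcase) ?_
          split_ifs with hcpos
          · have hc2 : (0:ℝ) < c ^ 2 := by positivity
            rw [lt_div_iff₀ hc2]
            have hcc : c ^ 2 < K ^ 2 := by nlinarith
            nlinarith [mul_lt_mul_of_pos_left hcc hα0]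
          · exact hα1
        refine ⟨(α + u) / 2, by linarith, ?_, ?_, ?_⟩
        · have : u ≤ 1 := le_trans (min_le_left _ _) (min_le_left _ _)
          linarith
        · have h1 : u ≤ γ₁ / γ₂ := le_trans (min_le_left _ _) (min_le_right _ _)
          have h2 : (α + u) / 2 < γ₁ / γ₂ := by linarith
          calc (α + u) / 2 * γ₂ < (γ₁ / γ₂) * γ₂ := by nlinarith
          _ = γ₁ := by field_simp
        · intro hcp
          have h1 : u ≤ γ₂ * Sig * y ^ 2 / c ^ 2 := by
            rw [hudef, if_pos hcp]; exact min_le_right _ _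
          have hc2 : (0:ℝ) < c ^ 2 := by positivity
          have h2 : (α + u) / 2 < γ₂ * Sig * y ^ 2 / c ^ 2 := by linarith
          exact (lt_div_iff₀ hc2).mp h2
      have hβ0 : 0 < β := lt_trans hα0 hβα
      obtain ⟨s, hs0, hs2⟩ : ∃ s : ℝ, 0 < s ∧ s ^ 2 = γ₂ * Sig / β :=
        ⟨Real.sqrt (γ₂ * Sig / β), by positivity, Real.sq_sqrt (by positivity)⟩
      set x : ℝ := μ + s * y / |y| with hx
      have hxy : x * y = μ * y + s * |y| := by
        have hay' : |y| ≠ 0 := ne_of_gt hay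
        rw [hx]
        field_simp
        linear_combination (-s) * sq_abs y
      have hxb : b < x * y := by
        rw [hxy]
        rcases le_or_gt c 0 with hcn | hcp
        · have : 0 < s * |y| := by positivity
          rw [hc] at hcn; linarith
        · have hkey : c ^ 2 < (s * |y|) ^ 2 := by
            have h2 : (s * |y|) ^ 2 = γ₂ * Sig * y ^ 2 / β := by
              rw [mul_pow, hs2, sq_abs]; ring
            rw [h2, lt_div_iff₀ hβ0]; linarith [hβc hcp]
          have hsy : 0 < s * |y| := by positivity
          nlinarith [hkey, hsy, hcp]
      set P : Measure ℝ :=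
        (ENNReal.ofReal (1 - β)) • Measure.dirac μ + (ENNReal.ofReal β) • Measure.dirac x with hP
      haveI hPp : IsProbabilityMeasure P := twopoint_prob β μ x (le_of_lt hβ0) (le_of_lt hβ1)
      have hmean : ∫ t, t ∂P = (1 - β) * μ + β * x :=
        integral_twopoint (fun t => t) (1 - β) β μ x (by linarith) (le_of_lt hβ0)
      have hsecond : ∫ t, (t - μ) ^ 2 ∂P = β * (x - μ) ^ 2 := by
        rw [hP, integral_twopoint (fun t => (t - μ) ^ 2) (1 - β) β μ x (by linarith)
          (le_of_lt hβ0)]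
        norm_num
      have hxμ2 : (x - μ) ^ 2 = s ^ 2 := by
        rw [hx]
        have h1 : μ + s * y / |y| - μ = s * (y / |y|) := by ring
        rw [h1, mul_pow, div_pow, sq_abs, div_self (by positivity)]
        ring
      have hmem : P ∈ D := by
        rw [hD]
        refine ⟨hPp, twopoint_memlp β μ x (le_of_lt hβ0) (le_of_lt hβ1), ?_, ?_⟩
        · rw [hmean]
          have h1 : (1 - β) * μ + β * x - μ = β * (x - μ) := by ring
          rw [h1, mul_pow, hxμ2, hs2]
          have h2 : β ^ 2 * (γ₂ * Sig / β) = β * γ₂ * Sig := by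
            field_simp
          rw [h2]
          nlinarith
        · rw [hsecond, hxμ2, hs2]
          have h2 : β * (γ₂ * Sig / β) = γ₂ * Sig := by field_simp
          rw [h2]
      have hcontra := hall _ hmem
      -- but P of the set is at most 1 - β < 1 - α
      have hxnot : x ∉ {t : ℝ | t * y ≤ b} := by
        simp only [Set.mem_setOf_eq]; linarith
      have hPS : P {t : ℝ | t * y ≤ b} ≤ ENNReal.ofReal (1 - β) := by
        rw [hP, Measure.add_apply, Measure.smul_apply, Measure.smul_apply,
          Measure.dirac_apply' _ hS, Measure.dirac_apply' _ hS,
          Set.indicator_of_notMem hxnot]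
        have hind : Set.indicator {t : ℝ | t * y ≤ b} (1 : ℝ → ENNReal) μ ≤ 1 := by
          by_cases h : μ ∈ {t : ℝ | t * y ≤ b} <;> simp [Set.indicator_apply, h]
        calc ENNReal.ofReal (1 - β) • Set.indicator {t : ℝ | t * y ≤ b} 1 μ
              + ENNReal.ofReal β • (0 : ENNReal)
            = ENNReal.ofReal (1 - β) * Set.indicator {t : ℝ | t * y ≤ b} 1 μ := by
              simp [smul_eq_mul]
        _ ≤ ENNReal.ofReal (1 - β) * 1 := by gcongr
        _ = ENNReal.ofReal (1 - β) := mul_one _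
      have hfin : (P {t : ℝ | t * y ≤ b}).toReal ≤ 1 - β := by
        calc (P {t : ℝ | t * y ≤ b}).toReal ≤ (ENNReal.ofReal (1 - β)).toReal :=
          ENNReal.toReal_mono ENNReal.ofReal_ne_top hPS
        _ = 1 - β := ENNReal.toReal_ofReal (by linarith)
      linarith
  · -- (b) → (a) : Chebyshev
    intro hb P hPD
    rw [hD] at hPD
    obtain ⟨hPp, hP2, hmean, hvar⟩ := hPD
    haveI := hPp
    by_cases hy : y = 0
    · subst hy
      have huniv : {t : ℝ | t * 0 ≤ b} = Set.univ := by
        ext t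
        simp only [Set.mem_setOf_eq, mul_zero, Set.mem_univ, iff_true]
        have hl0 : 0 ≤ l := by rw [hl]; positivity
        have h0 : Real.sqrt (Sig * 0 ^ 2) = 0 := by norm_num
        nlinarith [hb, h0, mul_nonneg hl0 (Real.sqrt_nonneg (Sig * 0 ^ 2))]
      rw [huniv]
      simp
      linarith
    · have hay : (0:ℝ) < |y| := abs_pos.mpr hy
      set ε : ℝ := γ₂ * Sig / α with hε
      have hε0 : 0 < ε := by positivity
      have hεK : Real.sqrt ε * |y| = l * Real.sqrt (Sig * y ^ 2) := by
        rw [hlK, hε, ← Real.sqrt_sq (le_of_lt hay), ← Real.sqrt_mul (by positivity), sq_abs]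
        congr 1
        field_simp
      -- the complement event
      have hsub : {t : ℝ | t * y ≤ b}ᶜ ⊆ {t : ℝ | ε ≤ (t - μ) ^ 2} := by
        intro t ht
        simp only [Set.mem_compl_iff, Set.mem_setOf_eq, not_le] at ht
        have h1 : μ * y + Real.sqrt ε * |y| ≤ b := by rw [hεK]; linarith
        have h2 : Real.sqrt ε * |y| < (t - μ) * y := by nlinarith
        have h3 : (t - μ) * y ≤ |t - μ| * |y| := by
          rw [← abs_mul]; exact le_abs_self _
        have h4 : Real.sqrt ε < |t - μ| :=
          lt_of_mul_lt_mul_right (lt_of_lt_of_le h2 h3) (le_of_lt hay)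
        simp only [Set.mem_setOf_eq]
        nlinarith [Real.sq_sqrt (le_of_lt hε0), Real.sqrt_nonneg ε, sq_abs (t - μ)]
      have hInt : Integrable (fun t => (t - μ) ^ 2) P := by
        have := (hP2.sub (memLp_const μ)).integrable_sq
        simpa using this
      have hmarkov := mul_meas_ge_le_integral_of_nonneg
        (μ := P) (f := fun t => (t - μ) ^ 2) (ae_of_all _ fun t => by positivity) hInt ε
      have hPA : (P {t : ℝ | ε ≤ (t - μ) ^ 2}).toReal ≤ α := by
        have h1 : ε * (P {t : ℝ | ε ≤ (t - μ) ^ 2}).toReal ≤ γ₂ * Sig :=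
          le_trans hmarkov hvar
        have h2 : γ₂ * Sig = ε * α := by rw [hε]; field_simp
        rw [h2] at h1
        exact le_of_mul_le_mul_left h1 hε0
      have hPc : (P {t : ℝ | t * y ≤ b}ᶜ).toReal ≤ α := by
        refine le_trans ?_ hPA
        exact ENNReal.toReal_mono (measure_ne_top P _) (measure_mono hsub)
      have hcompl : P {t : ℝ | t * y ≤ b} = 1 - P {t : ℝ | t * y ≤ b}ᶜ := by
        have h := prob_compl_eq_one_sub (μ := P) hS.compl
        rwa [compl_compl] at h
      rw [hcompl, ENNReal.toReal_sub_of_le prob_le_one ENNReal.one_ne_top, ENNReal.toReal_one]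
      linarith
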